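/- For all real numbers A > 1 and B > 0, the series ∑_{k=1}^∞ A^k e^{-B·2^k} converges and satisfies ∑_{k=1}^∞ A^k e^{-B·2^k} ≤ (2·ln A / (B·e·ln 2))^{ln A / ln 2} · (1/B). -/

import Mathlib

/- For all reals A > 1, B > 0, the series ∑_{k=1}^∞ A^k e^{-B·2^k} converges and
   ∑_{k=1}^∞ A^k e^{-B·2^k} ≤ (2 ln A / (B e ln 2))^{ln A / ln 2} · (1/B). -/
theorem stmt_0 (A B : ℝ) (hA : 1 < A) (hB : 0 < B) :
    Summable (fun k : ℕ => A ^ (k + 1) * Real.exp (-B * 2 ^ (k + 1))) ∧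
    (∑' k : ℕ, A ^ (k + 1) * Real.exp (-B * 2 ^ (k + 1))) ≤
      (2 * Real.log A / (B * Real.exp 1 * Real.log 2)) ^ (Real.log A / Real.log 2)
        * (1 / B) := by
  have hA0 : (0:ℝ) < A := by linarith
  have hlogA : 0 < Real.log A := Real.log_pos hA
  have hlog2 : 0 < Real.log 2 := Real.log_pos one_lt_two
  have he : (0:ℝ) < Real.exp 1 := Real.exp_pos 1
  set C : ℝ := Real.log A / Real.log 2 with hCdef
  have hC : 0 < C := div_pos hlogA hlog2
  have hbase : 0 < 2 * Real.log A / (B * Real.exp 1 * Real.log 2) := by positivity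
  set K : ℝ := (2 * Real.log A / (B * Real.exp 1 * Real.log 2)) ^ C with hKdef
  have hK : 0 < K := Real.rpow_pos_of_pos hbase C
  have hbase_eq : 2 * Real.log A / (B * Real.exp 1 * Real.log 2) = (2 / B) * C / Real.exp 1 := by
    rw [hCdef]; field_simp
  have hlogK : Real.log K = C * (Real.log (2 / B) + Real.log C - 1) := by
    rw [hKdef, Real.log_rpow hbase, hbase_eq, Real.log_div (by positivity) (ne_of_gt he),
      Real.log_mul (by positivity) (ne_of_gt hC), Real.log_exp]
  -- key term bound
  have key : ∀ n : ℕ, 1 ≤ n → A ^ n * Real.exp (-B * 2 ^ n) ≤ K * Real.exp (-(B * n)) := by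
    intro n hn
    have hn1 : (1:ℝ) ≤ (n:ℝ) := by exact_mod_cast hn
    have h2n : (2:ℝ) * n ≤ 2 ^ n := by
      have h1 : 2 * n ≤ 2 ^ n := by
        obtain ⟨m, rfl⟩ := Nat.exists_eq_add_of_le hn
        have := Nat.lt_two_pow_self (n := m)
        calc 2 * (1 + m) ≤ 2 * 2 ^ m := by omega
          _ = 2 ^ (1 + m) := by rw [pow_add, pow_one]
      exact_mod_cast h1
    set x : ℝ := B * 2 ^ n / 2 with hxdef
    have hx : 0 < x := by positivity
    have hlog : Real.log (x / C) ≤ x / C - 1 := Real.log_le_sub_one_of_pos (by positivity)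
    have hlog' : Real.log x - Real.log C ≤ x / C - 1 := by
      rwa [Real.log_div (ne_of_gt hx) (ne_of_gt hC)] at hlog
    have h2x : (2:ℝ) ^ n = (2 / B) * x := by rw [hxdef]; field_simp
    have hlog2n : (n:ℝ) * Real.log 2 = Real.log (2 / B) + Real.log x := by
      rw [← Real.log_pow, h2x, Real.log_mul (by positivity) (ne_of_gt hx)]
    have hClog2 : C * Real.log 2 = Real.log A := by
      rw [hCdef]; field_simp
    have hAn : (n:ℝ) * Real.log A ≤ Real.log K + x := by
      have h1 : (n:ℝ) * Real.log A = C * ((n:ℝ) * Real.log 2) := by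
        rw [← hClog2]; ring
      rw [h1, hlog2n, hlogK]
      have := mul_le_mul_of_nonneg_left hlog' (le_of_lt hC)
      have hCx : C * (x / C) = x := by field_simp
      nlinarith
    have hApow : A ^ n = Real.exp ((n:ℝ) * Real.log A) := by
      rw [Real.exp_nat_mul, Real.exp_log hA0]
    have hbx : -B * 2 ^ n = -(2 * x) := by rw [hxdef]; ring
    calc A ^ n * Real.exp (-B * 2 ^ n)
        = Real.exp ((n:ℝ) * Real.log A + -(2 * x)) := by
          rw [hApow, hbx, Real.exp_add]
      _ ≤ Real.exp (Real.log K + x + -(2 * x)) := by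
          apply Real.exp_le_exp.2; linarith
      _ = K * Real.exp (-x) := by
          rw [show Real.log K + x + -(2 * x) = Real.log K + -x by ring,
            Real.exp_add, Real.exp_log hK]
      _ ≤ K * Real.exp (-(B * n)) := by
          apply mul_le_mul_of_nonneg_left _ (le_of_lt hK)
          apply Real.exp_le_exp.2
          rw [hxdef]; nlinarith
  have hkey : ∀ k : ℕ, A ^ (k + 1) * Real.exp (-B * 2 ^ (k + 1))
      ≤ (K * Real.exp (-B)) * Real.exp (-B) ^ k := by
    intro k
    have := key (k + 1) (Nat.le_add_left 1 k)
    calc A ^ (k + 1) * Real.exp (-B * 2 ^ (k + 1))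
        ≤ K * Real.exp (-(B * (k + 1))) := by exact_mod_cast this
      _ = (K * Real.exp (-B)) * Real.exp (-B) ^ k := by
          rw [mul_assoc, ← Real.exp_nat_mul, ← Real.exp_add]
          congr 1
          push_cast; ring
  have hr : Real.exp (-B) < 1 := Real.exp_lt_one_iff.2 (by linarith)
  have hr0 : 0 < Real.exp (-B) := Real.exp_pos _
  have hgsum : Summable (fun k : ℕ => (K * Real.exp (-B)) * Real.exp (-B) ^ k) :=
    (summable_geometric_of_lt_one (le_of_lt hr0) hr).mul_left _
  have hnonneg : ∀ k : ℕ, 0 ≤ A ^ (k + 1) * Real.exp (-B * 2 ^ (k + 1)) := by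
    intro k; positivity
  have hsummable : Summable (fun k : ℕ => A ^ (k + 1) * Real.exp (-B * 2 ^ (k + 1))) :=
    Summable.of_nonneg_of_le hnonneg hkey hgsum
  refine ⟨hsummable, ?_⟩
  have h1 : (∑' k : ℕ, A ^ (k + 1) * Real.exp (-B * 2 ^ (k + 1)))
      ≤ ∑' k : ℕ, (K * Real.exp (-B)) * Real.exp (-B) ^ k :=
    Summable.tsum_le_tsum hkey hsummable hgsum
  have h2 : (∑' k : ℕ, (K * Real.exp (-B)) * Real.exp (-B) ^ k)
      = (K * Real.exp (-B)) * (1 - Real.exp (-B))⁻¹ := by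
    rw [tsum_mul_left, tsum_geometric_of_lt_one (le_of_lt hr0) hr]
  have hexpB : B + 1 ≤ Real.exp B := Real.add_one_le_exp B
  have h3 : (K * Real.exp (-B)) * (1 - Real.exp (-B))⁻¹ ≤ K * (1 / B) := by
    rw [Real.exp_neg]
    have heB : 0 < Real.exp B := Real.exp_pos B
    have hE1 : 1 < Real.exp B := by linarith
    have heq : K * (Real.exp B)⁻¹ * (1 - (Real.exp B)⁻¹)⁻¹ = K / (Real.exp B - 1) := by
      rw [eq_div_iff (by linarith : Real.exp B - 1 ≠ 0)]
      field_simp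
      rw [div_self (by linarith : Real.exp B - 1 ≠ 0)]
    rw [heq, mul_one_div, div_le_div_iff₀ (by linarith) hB]
    nlinarith [mul_nonneg hK.le (by linarith : (0:ℝ) ≤ Real.exp B - 1 - B)]
  calc (∑' k : ℕ, A ^ (k + 1) * Real.exp (-B * 2 ^ (k + 1))) ≤ _ := h1
    _ = _ := h2
    _ ≤ K * (1 / B) := h3
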